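/- Define r, r̃ : ℝ² → ℝ³ by r(x,y) = (x, y, x²) and r̃(x,y) = (2x, 2y, 4x²). Then (i) r̃ = r ∘ φ where φ(x,y) = (2x, 2y), so in particular the images of r and r̃ coincide; (ii) r(0,0) = r̃(0,0) and the unit normals of r and r̃ at the origin both equal (0,0,1); but (iii) Dr(0,0) ≠ Dr̃(0,0). -/

import Mathlib

noncomputable def unitNormal12 (f : ℝ × ℝ → Fin 3 → ℝ) (v : ℝ × ℝ) : Fin 3 → ℝ :=
  let c := crossProduct (fderiv ℝ f v (1, 0)) (fderiv ℝ f v (0, 1))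
  (Real.sqrt (∑ i, c i ^ 2))⁻¹ • c

def r12 : ℝ × ℝ → Fin 3 → ℝ := fun v => ![v.1, v.2, v.1 ^ 2]

def rt12 : ℝ × ℝ → Fin 3 → ℝ := fun v => ![2 * v.1, 2 * v.2, 4 * v.1 ^ 2]

open ContinuousLinearMap in
lemma hasFDerivAt_vec3 {f1 f2 f3 : ℝ × ℝ → ℝ} {L1 L2 L3 : ℝ × ℝ →L[ℝ] ℝ}
    {x : ℝ × ℝ} (h1 : HasFDerivAt f1 L1 x) (h2 : HasFDerivAt f2 L2 x)
    (h3 : HasFDerivAt f3 L3 x) :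
    HasFDerivAt (fun v => ![f1 v, f2 v, f3 v] : ℝ × ℝ → Fin 3 → ℝ)
      (ContinuousLinearMap.pi ![L1, L2, L3]) x := by
  apply hasFDerivAt_pi''
  intro i
  fin_cases i <;> simpa [ContinuousLinearMap.proj_pi] using ‹_›

lemma hasFDerivAt_r12 : HasFDerivAt r12
    (ContinuousLinearMap.pi ![ContinuousLinearMap.fst ℝ ℝ ℝ, ContinuousLinearMap.snd ℝ ℝ ℝ, 0]) 0 := by
  have h3 : HasFDerivAt (fun v : ℝ × ℝ => v.1 ^ 2) (0 : ℝ × ℝ →L[ℝ] ℝ) 0 := by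
    have := (hasFDerivAt_fst (𝕜 := ℝ) (p := (0 : ℝ × ℝ))).mul (hasFDerivAt_fst (𝕜 := ℝ) (p := (0 : ℝ × ℝ)))
    simp only [sq]
    refine this.congr_fderiv ?_
    simp
  exact hasFDerivAt_vec3 (hasFDerivAt_fst) (hasFDerivAt_snd) h3

lemma hasFDerivAt_rt12 : HasFDerivAt rt12
    (ContinuousLinearMap.pi ![(2 : ℝ) • ContinuousLinearMap.fst ℝ ℝ ℝ,
      (2 : ℝ) • ContinuousLinearMap.snd ℝ ℝ ℝ, 0]) 0 := by
  have h1 : HasFDerivAt (fun v : ℝ × ℝ => 2 * v.1)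
      ((2 : ℝ) • ContinuousLinearMap.fst ℝ ℝ ℝ) 0 := by
    simpa using (hasFDerivAt_fst (𝕜 := ℝ) (p := (0 : ℝ × ℝ))).const_mul 2
  have h2 : HasFDerivAt (fun v : ℝ × ℝ => 2 * v.2)
      ((2 : ℝ) • ContinuousLinearMap.snd ℝ ℝ ℝ) 0 := by
    simpa using (hasFDerivAt_snd (𝕜 := ℝ) (p := (0 : ℝ × ℝ))).const_mul 2
  have h3 : HasFDerivAt (fun v : ℝ × ℝ => 4 * v.1 ^ 2) (0 : ℝ × ℝ →L[ℝ] ℝ) 0 := by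
    have := ((hasFDerivAt_fst (𝕜 := ℝ) (p := (0 : ℝ × ℝ))).mul (hasFDerivAt_fst (𝕜 := ℝ) (p := (0 : ℝ × ℝ)))).const_mul 4
    simpa [sq, mul_assoc] using this
  exact hasFDerivAt_vec3 h1 h2 h3

theorem stmt12 :
    (rt12 = r12 ∘ (fun v : ℝ × ℝ => (2 * v.1, 2 * v.2)) ∧
      Set.range rt12 = Set.range r12) ∧
    (r12 0 = rt12 0 ∧
      unitNormal12 r12 0 = ![0, 0, 1] ∧ unitNormal12 rt12 0 = ![0, 0, 1]) ∧
    fderiv ℝ r12 0 ≠ fderiv ℝ rt12 0 := by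
  have hr := hasFDerivAt_r12.fderiv
  have hrt := hasFDerivAt_rt12.fderiv
  refine ⟨⟨?_, ?_⟩, ⟨?_, ?_, ?_⟩, ?_⟩
  · funext v
    simp [r12, rt12, Function.comp]
    ring_nf
  · apply Set.Subset.antisymm
    · rintro _ ⟨v, rfl⟩
      exact ⟨(2 * v.1, 2 * v.2), by simp [r12, rt12]; ring_nf⟩
    · rintro _ ⟨v, rfl⟩
      refine ⟨(v.1 / 2, v.2 / 2), ?_⟩
      simp only [r12, rt12]
      funext i
      fin_cases i <;> simp <;> ring
  · simp [r12, rt12]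
  · simp only [unitNormal12, hr]
    funext i
    fin_cases i <;>
      simp [crossProduct, ContinuousLinearMap.pi_apply, Fin.sum_univ_three,
        Matrix.cons_val_zero, Matrix.cons_val_one]
  · simp only [unitNormal12, hrt]
    funext i
    fin_cases i <;>
      simp [crossProduct, ContinuousLinearMap.pi_apply, Fin.sum_univ_three,
        Matrix.cons_val_zero, Matrix.cons_val_one] <;> norm_num
  · intro h
    have := congrFun (congrArg (fun L => (L : (ℝ × ℝ) →L[ℝ] (Fin 3 → ℝ)) (1, 0)) h) 0
    rw [hr, hrt] at this
    simp [ContinuousLinearMap.pi_apply] at this
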